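/- (Strictly bounded robust SINR lower bound.) Let M ≥ 1, let I be a finite index set, let σ² > 0, and let W₀ and W_i (i ∈ I) be M×M positive semidefinite Hermitian complex matrices. Let h̃₀, h̃_i ∈ ℂ^M be estimated channels and δ₀, δ_i ≥ 0 uncertainty radii, and set e₀ := δ₀² + 2δ₀‖h̃₀‖₂ and e_i := δ_i² + 2δ_i‖h̃_i‖₂. Assume Re(h̃₀ᴴ W₀ h̃₀) − e₀·‖W₀‖_F ≥ 0. Then for all error vectors ε₀, ε_i ∈ ℂ^M with ‖ε₀‖₂ ≤ δ₀ and ‖ε_i‖₂ ≤ δ_i, writing h₀ := h̃₀ + ε₀ and h_i := h̃_i + ε_i, the SINR satisfies (h₀ᴴ W₀ h₀) / (Σ_{i∈I} h_iᴴ W_i h_i + σ²) ≥ (Re(h̃₀ᴴ W₀ h̃₀) − e₀‖W₀‖_F) / (Σ_{i∈I} (Re(h̃_iᴴ W_i h̃_i) + e_i‖W_i‖_F) + σ²). -/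

import Mathlib

open Matrix
open scoped ComplexOrder

/-- Frobenius norm of a square complex matrix: `‖A‖_F = sqrt (Re Tr[Aᴴ A])`. -/
noncomputable def frobNorm {M : ℕ} (A : Matrix (Fin M) (Fin M) ℂ) : ℝ :=
  Real.sqrt ((Aᴴ * A).trace.re)

/-- Euclidean norm of a complex vector. -/
noncomputable def enorm₂ {M : ℕ} (x : Fin M → ℂ) : ℝ :=
  Real.sqrt (∑ i, ‖x i‖ ^ 2)

/-- The (real) quadratic form `Re(hᴴ W h)` of a matrix `W` at a vector `h`. -/
noncomputable def quadForm {M : ℕ} (W : Matrix (Fin M) (Fin M) ℂ)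
    (h : Fin M → ℂ) : ℝ :=
  (dotProduct (star h) (W.mulVec h)).re

lemma enorm_nonneg {M : ℕ} (x : Fin M → ℂ) : 0 ≤ enorm₂ x := Real.sqrt_nonneg _

lemma frobNorm_nonneg {M : ℕ} (A : Matrix (Fin M) (Fin M) ℂ) : 0 ≤ frobNorm A :=
  Real.sqrt_nonneg _

lemma frobNorm_eq {M : ℕ} (A : Matrix (Fin M) (Fin M) ℂ) :
    frobNorm A = Real.sqrt (∑ i, ∑ j, ‖A i j‖ ^ 2) := by
  unfold frobNorm
  congr 1
  rw [Matrix.trace, Complex.re_sum]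
  rw [Finset.sum_comm]
  refine Finset.sum_congr rfl fun j _ => ?_
  rw [Matrix.diag_apply, Matrix.mul_apply, Complex.re_sum]
  refine Finset.sum_congr rfl fun i _ => ?_
  simp [Matrix.conjTranspose_apply, Complex.mul_re, 
    Complex.sq_norm, Complex.normSq_apply]

lemma row_bound {M : ℕ} (W : Matrix (Fin M) (Fin M) ℂ) (y : Fin M → ℂ) (i : Fin M) :
    ‖∑ j, W i j * y j‖ ≤ Real.sqrt (∑ j, ‖W i j‖ ^ 2) * enorm₂ y := by
  have hs : ‖∑ j, W i j * y j‖ ≤ ∑ j, ‖W i j‖ * ‖y j‖ := by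
    refine (norm_sum_le _ _).trans ?_
    refine Finset.sum_le_sum fun j _ => ?_
    rw [norm_mul]
  exact hs.trans (Real.sum_mul_le_sqrt_mul_sqrt _ _ _)

lemma cs_bound {M : ℕ} (W : Matrix (Fin M) (Fin M) ℂ) (x : Fin M → ℂ) :
    ∑ i, ‖x i‖ * Real.sqrt (∑ j, ‖W i j‖ ^ 2) ≤ enorm₂ x * frobNorm W := by
  have hcs := Real.sum_sqrt_mul_sqrt_le (f := fun i => ‖x i‖ ^ 2)
    (g := fun i => ∑ j, ‖W i j‖ ^ 2) Finset.univ
    (fun i => by positivity) (fun i => by positivity)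
  simp only [Real.sqrt_sq (norm_nonneg _)] at hcs
  rw [enorm₂, frobNorm_eq]
  exact hcs

lemma bilin_bound {M : ℕ} (W : Matrix (Fin M) (Fin M) ℂ) (x y : Fin M → ℂ) :
    |(dotProduct (star x) (W.mulVec y)).re| ≤ enorm₂ x * (frobNorm W * enorm₂ y) := by
  have hrep : dotProduct (star x) (W.mulVec y)
      = ∑ i, (starRingEnd ℂ) (x i) * ∑ j, W i j * y j := by
    simp [dotProduct, Matrix.mulVec]
  rw [hrep]
  calc |(∑ i, (starRingEnd ℂ) (x i) * ∑ j, W i j * y j).re|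
      ≤ ‖∑ i, (starRingEnd ℂ) (x i) * ∑ j, W i j * y j‖ := Complex.abs_re_le_norm _
    _ ≤ ∑ i, ‖(starRingEnd ℂ) (x i) * ∑ j, W i j * y j‖ := norm_sum_le _ _
    _ ≤ ∑ i, ‖x i‖ * (Real.sqrt (∑ j, ‖W i j‖ ^ 2) * enorm₂ y) := by
        refine Finset.sum_le_sum fun i _ => ?_
        rw [norm_mul]
        have : ‖(starRingEnd ℂ) (x i)‖ = ‖x i‖ := by simp
        rw [this]
        exact mul_le_mul_of_nonneg_left (row_bound W y i) (norm_nonneg _)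
    _ = (∑ i, ‖x i‖ * Real.sqrt (∑ j, ‖W i j‖ ^ 2)) * enorm₂ y := by
        rw [Finset.sum_mul]; exact Finset.sum_congr rfl fun i _ => by ring
    _ ≤ (enorm₂ x * frobNorm W) * enorm₂ y :=
        mul_le_mul_of_nonneg_right (cs_bound W x) (enorm_nonneg _)
    _ = enorm₂ x * (frobNorm W * enorm₂ y) := by ring

/-- Perturbation bound on the quadratic form. -/
lemma quad_pert {M : ℕ} (W : Matrix (Fin M) (Fin M) ℂ) (h ε : Fin M → ℂ)
    (δ : ℝ) (hδ : 0 ≤ δ) (hε : enorm₂ ε ≤ δ) :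
    |quadForm W (h + ε) - quadForm W h| ≤ (δ ^ 2 + 2 * δ * enorm₂ h) * frobNorm W := by
  have expand : quadForm W (h + ε) - quadForm W h
      = (dotProduct (star ε) (W.mulVec h)).re
        + (dotProduct (star h) (W.mulVec ε)).re
        + (dotProduct (star ε) (W.mulVec ε)).re := by
    unfold quadForm
    have : star (h + ε) = star h + star ε := by funext i; simp
    rw [this, Matrix.mulVec_add]
    simp only [add_dotProduct, dotProduct_add, Complex.add_re]
    ring
  rw [expand]
  have b1 := bilin_bound W ε h
  have b2 := bilin_bound W h ε
  have b3 := bilin_bound W ε ε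
  have hF := frobNorm_nonneg W
  have hh := enorm_nonneg h
  have he := enorm_nonneg ε
  have c1 : |(dotProduct (star ε) (W.mulVec h)).re| ≤ δ * (frobNorm W * enorm₂ h) :=
    b1.trans (mul_le_mul_of_nonneg_right hε (by positivity))
  have c2 : |(dotProduct (star h) (W.mulVec ε)).re| ≤ enorm₂ h * (frobNorm W * δ) :=
    b2.trans (by gcongr)
  have c3 : |(dotProduct (star ε) (W.mulVec ε)).re| ≤ δ * (frobNorm W * δ) :=
    b3.trans (by gcongr)
  calc |(dotProduct (star ε) (W.mulVec h)).re
        + (dotProduct (star h) (W.mulVec ε)).re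
        + (dotProduct (star ε) (W.mulVec ε)).re|
      ≤ |(dotProduct (star ε) (W.mulVec h)).re|
        + |(dotProduct (star h) (W.mulVec ε)).re|
        + |(dotProduct (star ε) (W.mulVec ε)).re| := by
          exact (abs_add_le _ _).trans (by gcongr; exact abs_add_le _ _)
    _ ≤ δ * (frobNorm W * enorm₂ h) + enorm₂ h * (frobNorm W * δ) + δ * (frobNorm W * δ) := by
          gcongr
    _ = (δ ^ 2 + 2 * δ * enorm₂ h) * frobNorm W := by ring

lemma quad_nonneg {M : ℕ} {W : Matrix (Fin M) (Fin M) ℂ} (hW : W.PosSemidef)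
    (h : Fin M → ℂ) : 0 ≤ quadForm W h := hW.re_dotProduct_nonneg h

/-- Strictly bounded robust SINR lower bound (equations (23)–(24)). -/
theorem robust_sinr_lower_bound (M : ℕ) (hM : 1 ≤ M)
    {I : Type*} [Fintype I] (σsq : ℝ) (hσ : 0 < σsq)
    (W₀ : Matrix (Fin M) (Fin M) ℂ) (hW₀ : W₀.PosSemidef)
    (Wi : I → Matrix (Fin M) (Fin M) ℂ) (hWi : ∀ i, (Wi i).PosSemidef)
    (htil₀ : Fin M → ℂ) (htili : I → Fin M → ℂ)
    (δ₀ : ℝ) (hδ₀ : 0 ≤ δ₀) (δi : I → ℝ) (hδi : ∀ i, 0 ≤ δi i)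
    (hnum : 0 ≤ quadForm W₀ htil₀ - (δ₀ ^ 2 + 2 * δ₀ * enorm₂ htil₀) * frobNorm W₀) :
    ∀ (ε₀ : Fin M → ℂ) (εi : I → Fin M → ℂ),
      enorm₂ ε₀ ≤ δ₀ → (∀ i, enorm₂ (εi i) ≤ δi i) →
      (quadForm W₀ htil₀ - (δ₀ ^ 2 + 2 * δ₀ * enorm₂ htil₀) * frobNorm W₀)
          / (∑ i, (quadForm (Wi i) (htili i)
                + (δi i ^ 2 + 2 * δi i * enorm₂ (htili i)) * frobNorm (Wi i)) + σsq)
        ≤ quadForm W₀ (htil₀ + ε₀)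
          / (∑ i, quadForm (Wi i) (htili i + εi i) + σsq) := by
  intro ε₀ εi hε₀ hεi
  have hc : 0 ≤ quadForm W₀ (htil₀ + ε₀) := quad_nonneg hW₀ _
  have hac : quadForm W₀ htil₀ - (δ₀ ^ 2 + 2 * δ₀ * enorm₂ htil₀) * frobNorm W₀
      ≤ quadForm W₀ (htil₀ + ε₀) := by
    have := quad_pert W₀ htil₀ ε₀ δ₀ hδ₀ hε₀
    have h' := abs_le.1 this
    linarith [h'.1]
  have hd : 0 < ∑ i, quadForm (Wi i) (htili i + εi i) + σsq := by
    have : 0 ≤ ∑ i, quadForm (Wi i) (htili i + εi i) :=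
      Finset.sum_nonneg fun i _ => quad_nonneg (hWi i) _
    linarith
  have hbd : ∑ i, quadForm (Wi i) (htili i + εi i) + σsq
      ≤ ∑ i, (quadForm (Wi i) (htili i)
          + (δi i ^ 2 + 2 * δi i * enorm₂ (htili i)) * frobNorm (Wi i)) + σsq := by
    have : ∀ i ∈ Finset.univ, quadForm (Wi i) (htili i + εi i)
        ≤ quadForm (Wi i) (htili i)
          + (δi i ^ 2 + 2 * δi i * enorm₂ (htili i)) * frobNorm (Wi i) := by
      intro i _
      have := quad_pert (Wi i) (htili i) (εi i) (δi i) (hδi i) (hεi i)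
      have h' := abs_le.1 this
      linarith [h'.2]
    linarith [Finset.sum_le_sum this]
  exact div_le_div₀ hc hac hd hbd
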